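/- Let n ≥ 1, let x, x' ∈ ([0,1]² × {−1,1})^n, and fix distinct indices i, j ∈ {1,…,n}. For S ⊆ {i,j} let x^S denote the configuration obtained from x by replacing its coordinates in positions belonging to S by the corresponding coordinates of x'. Assume that each of the four configurations x, x^{{i}}, x^{{j}}, x^{{i,j}} has pairwise distinct first components and pairwise distinct second components, and that in each of these four configurations the x-ranks of the points in positions i and j differ by at least 2 and their y-ranks differ by at least 2. Let f denote the map assigning to such a configuration y the number f(y) = des(π̃(y)) + des(π̃(y)^{-1}), where π̃(y) ∈ B_n is the signed permutation associated to y. Then f(x) − f(x^{{j}}) = f(x^{{i}}) − f(x^{{i,j}}). -/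

import Mathlib

open MeasureTheory ProbabilityTheory Filter Finset Topology

noncomputable section

/-- The index set `{-n, …, -1, 1, …, n}` on which signed permutations of rank `n` act. -/
abbrev SIdx (n : ℕ) := {i : ℤ // i ≠ 0 ∧ |i| ≤ (n : ℤ)}

instance SIdx.fintype (n : ℕ) : Fintype (SIdx n) :=
  Fintype.ofFinset ((Finset.Icc (-(n : ℤ)) (n : ℤ)).filter fun i => i ≠ 0)
    (by intro i; change _ ↔ (i ≠ 0 ∧ |i| ≤ (n : ℤ)); simp only [Finset.mem_filter, Finset.mem_Icc, abs_le]; omega)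

instance (n : ℕ) : Neg (SIdx n) :=
  ⟨fun i => ⟨-i.1, by
    obtain ⟨h1, h2⟩ := i.2; exact ⟨neg_ne_zero.mpr h1, by simpa [abs_neg] using h2⟩⟩⟩

@[simp] lemma SIdx.neg_val {n : ℕ} (i : SIdx n) : (-i).1 = -i.1 := rfl

/-- A permutation of `{-n, …, -1, 1, …, n}` is a signed permutation iff it is antisymmetric,
i.e. `π(-i) = -π(i)` for all `i`. -/
def IsSignedPerm (n : ℕ) (π : Equiv.Perm (SIdx n)) : Prop := ∀ i, π (-i) = -(π i)

instance (n : ℕ) : DecidablePred (IsSignedPerm n) :=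
  fun π => inferInstanceAs (Decidable (∀ i, π (-i) = -(π i)))

/-- The hyperoctahedral group `B_n`, i.e. the group of signed permutations of rank `n`. -/
abbrev BGroup (n : ℕ) := {π : Equiv.Perm (SIdx n) // IsSignedPerm n π}

instance (n : ℕ) : Nonempty (BGroup n) := ⟨⟨1, fun _ => rfl⟩⟩

/-- The value `π(j)` of a signed permutation in one-line notation (set to `0` outside the
domain; in particular `valAt n π 0 = 0`, matching the type-`B` convention `π(0) = 0`). -/
def valAt (n : ℕ) (π : Equiv.Perm (SIdx n)) (j : ℤ) : ℤ :=
  if h : j ≠ 0 ∧ |j| ≤ (n : ℤ) then (π ⟨j, h⟩).1 else 0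

/-- The descent number of a signed permutation (type-`B` convention `π(0) = 0`):
`des(π) = #{0 ≤ i ≤ n-1 : π(i) > π(i+1)}`. -/
def desB (n : ℕ) (π : Equiv.Perm (SIdx n)) : ℕ :=
  ((Finset.range n).filter fun i : ℕ => valAt n π ((i : ℤ) + 1) < valAt n π ((i : ℤ))).card

/-- Expectation of a statistic with respect to the uniform distribution on a finite set. -/
def expec {α : Type*} [Fintype α] (f : α → ℝ) : ℝ := (∑ x, f x) / (Fintype.card α)

/-- Variance of a statistic with respect to the uniform distribution on a finite set. -/
def varU {α : Type*} [Fintype α] (f : α → ℝ) : ℝ := expec fun x => (f x - expec f) ^ 2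

/-- The law of a real-valued statistic under the uniform distribution, as a probability
measure on `ℝ`. -/
def unifLaw {α : Type*} [Fintype α] [Nonempty α] (f : α → ℝ) : ProbabilityMeasure ℝ :=
  ⟨((PMF.uniformOfFintype α).map f).toMeasure, inferInstance⟩

/-- The standard normal distribution `N(0,1)` as a probability measure on `ℝ`. -/
def stdGaussianPM : ProbabilityMeasure ℝ := ⟨gaussianReal 0 1, inferInstance⟩

/-- The x-rank of the `i`-th point of a configuration: the position of `uᵢ` when the first
coordinates are sorted in ascending order. -/
def xrank {n : ℕ} (x : Fin n → ℝ × ℝ × Bool) (i : Fin n) : ℕ :=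
  (Finset.univ.filter fun j : Fin n => (x j).1 ≤ (x i).1).card

/-- The y-rank of the `i`-th point of a configuration: the position of `vᵢ` when the second
coordinates are sorted in ascending order. -/
def yrank {n : ℕ} (x : Fin n → ℝ × ℝ × Bool) (i : Fin n) : ℕ :=
  (Finset.univ.filter fun j : Fin n => (x j).2.1 ≤ (x i).2.1).card

/-- The sign of the `i`-th point (`true` codes `+1`). -/
def bsgn {n : ℕ} (x : Fin n → ℝ × ℝ × Bool) (i : Fin n) : ℤ :=
  if (x i).2.2 then 1 else -1

/-- The configuration lies in `([0,1]² × {±1})ⁿ`. -/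
def InRange {n : ℕ} (x : Fin n → ℝ × ℝ × Bool) : Prop :=
  ∀ i, (x i).1 ∈ Set.Icc (0 : ℝ) 1 ∧ (x i).2.1 ∈ Set.Icc (0 : ℝ) 1

/-- The first coordinates of the configuration are pairwise distinct, and so are the
second coordinates. -/
def DistinctCoords {n : ℕ} (x : Fin n → ℝ × ℝ × Bool) : Prop :=
  (∀ i j, i ≠ j → (x i).1 ≠ (x j).1) ∧ ∀ i j, i ≠ j → (x i).2.1 ≠ (x j).2.1

/-- `P` is the signed permutation associated to the configuration `x`: it is antisymmetric,
and for every point the value of `P` at the point's x-rank is its sign times its y-rank. -/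
def AssocSigned {n : ℕ} (x : Fin n → ℝ × ℝ × Bool) (P : Equiv.Perm (SIdx n)) : Prop :=
  IsSignedPerm n P ∧ ∀ i : Fin n, valAt n P (xrank x i) = bsgn x i * (yrank x i)

/-- The statistic `f = des(π̃) + des(π̃⁻¹)`. -/
def fstat (n : ℕ) (P : Equiv.Perm (SIdx n)) : ℤ := (desB n P : ℤ) + (desB n P⁻¹ : ℤ)

/-- The x-ranks of the points in positions `i` and `j` differ by at least `2`, and so do
their y-ranks. -/
def RankGap {n : ℕ} (x : Fin n → ℝ × ℝ × Bool) (i j : Fin n) : Prop :=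
  2 ≤ |(xrank x i : ℤ) - (xrank x j : ℤ)| ∧ 2 ≤ |(yrank x i : ℤ) - (yrank x j : ℤ)|

namespace Stmt14Aux

open scoped Classical

variable {n : ℕ}

/-- Generic rank of a real-valued tuple. -/
noncomputable def rk (g : Fin n → ℝ) (i : Fin n) : ℕ :=
  (Finset.univ.filter fun j => g j ≤ g i).card

lemma xrank_eq_rk (y : Fin n → ℝ × ℝ × Bool) (i : Fin n) :
    xrank y i = rk (fun p => (y p).1) i := by
  unfold xrank rk; congr 1

lemma yrank_eq_rk (y : Fin n → ℝ × ℝ × Bool) (i : Fin n) :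
    yrank y i = rk (fun p => (y p).2.1) i := by
  unfold yrank rk; congr 1

lemma rk_pos (g : Fin n → ℝ) (i : Fin n) : 1 ≤ rk g i :=
  Finset.card_pos.mpr ⟨i, by simp [rk]⟩

lemma rk_le (g : Fin n → ℝ) (i : Fin n) : rk g i ≤ n :=
  le_trans (Finset.card_filter_le _ _) (by simp)

lemma rk_mono {g : Fin n → ℝ} {p q : Fin n} (h : g p ≤ g q) : rk g p ≤ rk g q :=
  Finset.card_le_card (by
    intro r hr
    simp only [rk, Finset.mem_filter, Finset.mem_univ, true_and] at hr ⊢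
    exact le_trans hr h)

lemma rk_strict {g : Fin n → ℝ} {p q : Fin n} (h : g p < g q) : rk g p < rk g q := by
  apply Finset.card_lt_card
  constructor
  · intro s hs
    simp only [Finset.mem_filter, Finset.mem_univ, true_and] at hs ⊢
    exact le_trans hs h.le
  · intro hsub
    have hq : q ∈ Finset.univ.filter fun j => g j ≤ g q := by simp
    have := hsub hq
    simp only [Finset.mem_filter, Finset.mem_univ, true_and] at this
    exact absurd this (not_le.mpr h)

lemma rk_lt_iff {g : Fin n → ℝ} {p q : Fin n} : rk g p < rk g q ↔ g p < g q := by
  constructor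
  · intro h
    by_contra hc
    push_neg at hc
    exact absurd (rk_mono hc) (by omega)
  · exact rk_strict

lemma rk_inj {g : Fin n → ℝ} (hg : ∀ a b, a ≠ b → g a ≠ g b) {p q : Fin n}
    (h : rk g p = rk g q) : p = q := by
  by_contra hne
  rcases (hg p q hne).lt_or_gt with h' | h'
  · exact absurd (rk_strict h') (by omega)
  · exact absurd (rk_strict h') (by omega)

lemma rk_surj {g : Fin n → ℝ} (hg : ∀ a b, a ≠ b → g a ≠ g b) {r : ℕ}
    (h1 : 1 ≤ r) (h2 : r ≤ n) : ∃ q, rk g q = r := by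
  have hinj : Function.Injective (rk g) := fun a b hab => rk_inj hg hab
  have himg : (Finset.univ.image (rk g)) ⊆ Finset.Icc 1 n := by
    intro a ha
    simp only [Finset.mem_image, Finset.mem_univ, true_and] at ha
    obtain ⟨b, rfl⟩ := ha
    simp only [Finset.mem_Icc]
    exact ⟨rk_pos g b, rk_le g b⟩
  have hcard : (Finset.univ.image (rk g)).card = n := by
    rw [Finset.card_image_of_injective _ hinj, Finset.card_univ, Fintype.card_fin]
  have heq : (Finset.univ.image (rk g)) = Finset.Icc 1 n := by
    apply Finset.eq_of_subset_of_card_le himg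
    rw [hcard, Nat.card_Icc]; omega
  have : r ∈ Finset.univ.image (rk g) := by
    rw [heq]; simp only [Finset.mem_Icc]; exact ⟨h1, h2⟩
  simpa using this

lemma rk_eq_one_iff {g : Fin n → ℝ} (hg : ∀ a b, a ≠ b → g a ≠ g b) {q : Fin n} :
    rk g q = 1 ↔ ∀ r, g q ≤ g r := by
  constructor
  · intro h r
    by_contra hr
    push_neg at hr
    have hrq : r ≠ q := fun h' => absurd hr (by simp [h'])
    have hsub : ({q, r} : Finset (Fin n)) ⊆ Finset.univ.filter fun j => g j ≤ g q := by
      intro s hs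
      simp only [Finset.mem_insert, Finset.mem_singleton] at hs
      rcases hs with rfl | rfl <;> simp [le_of_lt hr]
    have h2 : 2 ≤ rk g q := by
      have := Finset.card_le_card hsub
      rwa [Finset.card_insert_of_notMem (by simp [hrq.symm]), Finset.card_singleton] at this
    omega
  · intro h
    refine le_antisymm ?_ (rk_pos g q)
    have hsub : (Finset.univ.filter fun j => g j ≤ g q) ⊆ {q} := by
      intro s hs
      simp only [Finset.mem_filter, Finset.mem_univ, true_and] at hs
      simp only [Finset.mem_singleton]
      by_contra hne
      exact hg s q hne (le_antisymm hs (h s))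
    simpa [rk] using Finset.card_le_card hsub

/-- `r` lies strictly between `p` and `q` in `u`-coordinate. -/
def Btw (y : Fin n → ℝ × ℝ × Bool) (p q r : Fin n) : Prop :=
  (y p).1 < (y r).1 ∧ (y r).1 < (y q).1

/-- `q` is the `u`-successor of `p`. -/
def Succ (y : Fin n → ℝ × ℝ × Bool) (p q : Fin n) : Prop :=
  (y p).1 < (y q).1 ∧ ∀ r, ¬ Btw y p q r

/-- `q` has the minimal `u`-coordinate. -/
def MinPt (y : Fin n → ℝ × ℝ × Bool) (q : Fin n) : Prop :=
  ∀ r, (y q).1 ≤ (y r).1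

lemma succ_iff_rank {y : Fin n → ℝ × ℝ × Bool}
    (hd1 : ∀ a b, a ≠ b → (y a).1 ≠ (y b).1) {p q : Fin n} :
    Succ y p q ↔ xrank y q = xrank y p + 1 := by
  rw [xrank_eq_rk, xrank_eq_rk]
  set g : Fin n → ℝ := fun p => (y p).1 with hg
  constructor
  · rintro ⟨hlt, hbtw⟩
    have h1 : rk g p < rk g q := rk_strict hlt
    have h2 : rk g q ≤ rk g p + 1 := by
      have hsub : (Finset.univ.filter fun j => g j ≤ g q) ⊆
          insert q (Finset.univ.filter fun j => g j ≤ g p) := by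
        intro s hs
        simp only [Finset.mem_filter, Finset.mem_univ, true_and] at hs
        simp only [Finset.mem_insert, Finset.mem_filter, Finset.mem_univ, true_and]
        by_cases hsq : s = q
        · exact Or.inl hsq
        · refine Or.inr ?_
          have hslt : g s < g q := lt_of_le_of_ne hs (hd1 s q hsq)
          have := hbtw s
          simp only [Btw] at this
          push_neg at this
          by_contra hc
          push_neg at hc
          exact absurd (this hc) (not_le.mpr hslt)
      calc rk g q ≤ (insert q (Finset.univ.filter fun j => g j ≤ g p)).card :=
            Finset.card_le_card hsub
        _ ≤ rk g p + 1 := Finset.card_insert_le _ _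
    omega
  · intro h
    refine ⟨rk_lt_iff.mp (show rk g p < rk g q by omega), fun r hr => ?_⟩
    obtain ⟨hr1, hr2⟩ := hr
    have h1 : rk g p < rk g r := rk_strict hr1
    have h2 : rk g r < rk g q := rk_strict hr2
    omega

lemma min_iff_rank {y : Fin n → ℝ × ℝ × Bool}
    (hd1 : ∀ a b, a ≠ b → (y a).1 ≠ (y b).1) {q : Fin n} :
    MinPt y q ↔ xrank y q = 1 := by
  rw [xrank_eq_rk]
  exact (rk_eq_one_iff hd1).symm

lemma no_adj {y : Fin n → ℝ × ℝ × Bool} {i j : Fin n}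
    (hd : DistinctCoords y) (hg : RankGap y i j) : ¬ Succ y i j ∧ ¬ Succ y j i := by
  have h2 := hg.1
  constructor
  · intro hs
    rw [succ_iff_rank hd.1] at hs
    rcases abs_cases ((xrank y i : ℤ) - (xrank y j : ℤ)) with ⟨h, _⟩ | ⟨h, _⟩ <;> omega
  · intro hs
    rw [succ_iff_rank hd.1] at hs
    rcases abs_cases ((xrank y i : ℤ) - (xrank y j : ℤ)) with ⟨h, _⟩ | ⟨h, _⟩ <;> omega

lemma xrank_pos (y : Fin n → ℝ × ℝ × Bool) (q : Fin n) : 1 ≤ xrank y q := by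
  rw [xrank_eq_rk]; exact rk_pos _ _

lemma xrank_le_n (y : Fin n → ℝ × ℝ × Bool) (q : Fin n) : xrank y q ≤ n := by
  rw [xrank_eq_rk]; exact rk_le _ _

lemma yrank_pos (y : Fin n → ℝ × ℝ × Bool) (q : Fin n) : 1 ≤ yrank y q := by
  rw [yrank_eq_rk]; exact rk_pos _ _

lemma yrank_le_n (y : Fin n → ℝ × ℝ × Bool) (q : Fin n) : yrank y q ≤ n := by
  rw [yrank_eq_rk]; exact rk_le _ _

lemma xrank_inj {y : Fin n → ℝ × ℝ × Bool} (hd1 : ∀ a b, a ≠ b → (y a).1 ≠ (y b).1)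
    {p q : Fin n} (h : xrank y p = xrank y q) : p = q :=
  rk_inj hd1 (by rwa [xrank_eq_rk, xrank_eq_rk] at h)

lemma xrank_surj {y : Fin n → ℝ × ℝ × Bool} (hd1 : ∀ a b, a ≠ b → (y a).1 ≠ (y b).1)
    {r : ℕ} (h1 : 1 ≤ r) (h2 : r ≤ n) : ∃ q, xrank y q = r := by
  obtain ⟨q, hq⟩ := rk_surj (g := fun p => (y p).1) hd1 h1 h2
  exact ⟨q, by rw [xrank_eq_rk]; exact hq⟩

lemma yrank_lt_iff {y : Fin n → ℝ × ℝ × Bool} {p q : Fin n} :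
    yrank y p < yrank y q ↔ (y p).2.1 < (y q).2.1 := by
  rw [yrank_eq_rk, yrank_eq_rk]; exact rk_lt_iff

/-- The local descent comparison between a point `p` and its `u`-successor `q`. -/
def Gp (y : Fin n → ℝ × ℝ × Bool) (p q : Fin n) : Prop :=
  if (y p).2.2 then (if (y q).2.2 then (y q).2.1 < (y p).2.1 else True)
  else (if (y q).2.2 then False else (y p).2.1 < (y q).2.1)

noncomputable def mterm (y : Fin n → ℝ × ℝ × Bool) (q : Fin n) : ℤ :=
  if MinPt y q ∧ (y q).2.2 = false then 1 else 0

noncomputable def sterm (y : Fin n → ℝ × ℝ × Bool) (p q : Fin n) : ℤ :=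
  if Succ y p q ∧ Gp y p q then 1 else 0

noncomputable def locsum (y : Fin n → ℝ × ℝ × Bool) : ℤ :=
  ∑ q, (mterm y q + ∑ p, sterm y p q)

lemma desB_eq_locsum {y : Fin n → ℝ × ℝ × Bool} {P : Equiv.Perm (SIdx n)}
    (hd : DistinctCoords y) (hP : AssocSigned y P) : (desB n P : ℤ) = locsum y := by
  classical
  have hd1 := hd.1
  have step1 : (desB n P : ℤ) =
      ∑ r ∈ Finset.range n, (if valAt n P ((r : ℤ) + 1) < valAt n P ((r : ℤ)) then (1:ℤ) else 0) := by
    rw [desB, Finset.card_filter, Nat.cast_sum]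
    apply Finset.sum_congr rfl
    intro r _
    split <;> simp
  rw [step1]
  have himg : (Finset.univ.image fun q : Fin n => xrank y q - 1) = Finset.range n := by
    ext r
    simp only [Finset.mem_image, Finset.mem_univ, true_and, Finset.mem_range]
    constructor
    · rintro ⟨q, rfl⟩
      have h1 := xrank_pos y q
      have h2 := xrank_le_n y q
      omega
    · intro hr
      obtain ⟨q, hq⟩ := xrank_surj hd1 (r := r + 1) (by omega) (by omega)
      exact ⟨q, by omega⟩
  have hinj : ∀ a ∈ Finset.univ, ∀ b ∈ (Finset.univ : Finset (Fin n)),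
      xrank y a - 1 = xrank y b - 1 → a = b := by
    intro a _ b _ hab
    have ha := xrank_pos y a
    have hb := xrank_pos y b
    exact xrank_inj hd1 (by omega)
  rw [← himg, Finset.sum_image hinj]
  unfold locsum
  apply Finset.sum_congr rfl
  intro q _
  have hx1 := xrank_pos y q
  have hxn := xrank_le_n y q
  have hyq1 := yrank_pos y q
  have hcast2 : ((xrank y q - 1 : ℕ) : ℤ) + 1 = ((xrank y q : ℕ) : ℤ) := by omega
  have hvq := hP.2 q
  rw [hcast2, hvq]
  by_cases hq1 : xrank y q = 1
  · have hcast0 : ((xrank y q - 1 : ℕ) : ℤ) = 0 := by omega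
    rw [hcast0]
    have hv0 : valAt n P 0 = 0 := by simp [valAt]
    rw [hv0]
    have hmin : MinPt y q := (min_iff_rank hd1).mpr hq1
    have hsum0 : ∑ p, sterm y p q = 0 := by
      apply Finset.sum_eq_zero
      intro p _
      unfold sterm
      rw [if_neg]
      rintro ⟨hs, -⟩
      rw [succ_iff_rank hd1] at hs
      have := xrank_pos y p
      omega
    rw [hsum0, add_zero]
    cases hb : (y q).2.2
    · rw [show bsgn y q = -1 from by simp [bsgn, hb]]
      rw [if_pos (show (-1:ℤ) * (yrank y q : ℤ) < 0 by push_cast; omega)]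
      unfold mterm
      rw [if_pos ⟨hmin, hb⟩]
    · rw [show bsgn y q = 1 from by simp [bsgn, hb]]
      rw [if_neg (show ¬((1:ℤ) * (yrank y q : ℤ) < 0) by push_cast; omega)]
      unfold mterm
      rw [if_neg (by rintro ⟨-, h⟩; rw [hb] at h; simp at h)]
  · have hq2 : 2 ≤ xrank y q := by omega
    obtain ⟨p₀, hp₀⟩ := xrank_surj hd1 (r := xrank y q - 1) (by omega) (by omega)
    have hyp1 := yrank_pos y p₀
    have hcastp : ((xrank y p₀ : ℕ) : ℤ) = ((xrank y q - 1 : ℕ) : ℤ) := by omega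
    have hvp := hP.2 p₀
    rw [← hcastp, hvp]
    have hsucc : Succ y p₀ q := (succ_iff_rank hd1).mpr (by omega)
    have hmin0 : mterm y q = 0 := by
      unfold mterm
      rw [if_neg]
      rintro ⟨hm, -⟩
      rw [min_iff_rank hd1] at hm
      omega
    have hsum : ∑ p, sterm y p q = sterm y p₀ q := by
      apply Finset.sum_eq_single p₀
      · intro p _ hne
        unfold sterm
        rw [if_neg]
        rintro ⟨hs, -⟩
        rw [succ_iff_rank hd1] at hs
        exact hne (xrank_inj hd1 (by omega))
      · simp
    rw [hmin0, hsum, zero_add]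
    unfold sterm
    rw [if_congr (and_iff_right hsucc) rfl rfl]
    refine if_congr ?_ rfl rfl
    cases hbp : (y p₀).2.2 <;> cases hbq : (y q).2.2
    · rw [show bsgn y q = -1 from by simp [bsgn, hbq],
        show bsgn y p₀ = -1 from by simp [bsgn, hbp],
        show Gp y p₀ q ↔ (y p₀).2.1 < (y q).2.1 from by simp [Gp, hbp, hbq]]
      rw [← yrank_lt_iff]
      push_cast
      omega
    · rw [show bsgn y q = 1 from by simp [bsgn, hbq],
        show bsgn y p₀ = -1 from by simp [bsgn, hbp],
        show Gp y p₀ q ↔ False from by simp [Gp, hbp, hbq]]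
      simp only [iff_false]
      push_cast
      omega
    · rw [show bsgn y q = -1 from by simp [bsgn, hbq],
        show bsgn y p₀ = 1 from by simp [bsgn, hbp],
        show Gp y p₀ q ↔ True from by simp [Gp, hbp, hbq]]
      simp only [iff_true]
      push_cast
      omega
    · rw [show bsgn y q = 1 from by simp [bsgn, hbq],
        show bsgn y p₀ = 1 from by simp [bsgn, hbp],
        show Gp y p₀ q ↔ (y q).2.1 < (y p₀).2.1 from by simp [Gp, hbp, hbq]]
      rw [← yrank_lt_iff]
      push_cast
      omega

lemma succ_transfer_aux {y z : Fin n → ℝ × ℝ × Bool} {k p q : Fin n}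
    (hp : p ≠ k) (hq : q ≠ k) (hvp : z p = y p) (hvq : z q = y q)
    (hvr : ∀ r, r ≠ k → z r = y r)
    (hS : Succ y p q) (hS' : ¬ Succ z p q) : Succ z p k ∧ Succ z k q := by
  have hlt : (z p).1 < (z q).1 := by rw [hvp, hvq]; exact hS.1
  have hex : ∃ r, Btw z p q r := by
    by_contra hc
    push_neg at hc
    exact hS' ⟨hlt, hc⟩
  obtain ⟨r, hr⟩ := hex
  have hrk : r = k := by
    by_contra hrk
    exact hS.2 r ⟨by rw [← hvp, ← hvr r hrk]; exact hr.1, by rw [← hvq, ← hvr r hrk]; exact hr.2⟩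
  subst hrk
  constructor
  · refine ⟨hr.1, fun s hs => ?_⟩
    have hsk : s ≠ r := fun h' => by subst h'; exact lt_irrefl _ hs.2
    refine hS.2 s ⟨by rw [← hvp, ← hvr s hsk]; exact hs.1, ?_⟩
    have h2 : (z s).1 < (z q).1 := lt_trans hs.2 hr.2
    rw [← hvq, ← hvr s hsk]; exact h2
  · refine ⟨hr.2, fun s hs => ?_⟩
    have hsk : s ≠ r := fun h' => by subst h'; exact lt_irrefl _ hs.1
    refine hS.2 s ⟨?_, by rw [← hvq, ← hvr s hsk]; exact hs.2⟩
    have h2 : (z p).1 < (z s).1 := lt_trans hr.1 hs.1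
    rw [← hvp, ← hvr s hsk]; exact h2

lemma succ_transfer {y : Fin n → ℝ × ℝ × Bool} {k : Fin n} {a : ℝ × ℝ × Bool} {p q : Fin n}
    (hp : p ≠ k) (hq : q ≠ k)
    (h : ¬ (Succ y p q ↔ Succ (Function.update y k a) p q)) :
    (Succ y p k ∧ Succ y k q) ∨
      (Succ (Function.update y k a) p k ∧ Succ (Function.update y k a) k q) := by
  set z := Function.update y k a with hz
  have hvp : z p = y p := Function.update_of_ne hp _ _
  have hvq : z q = y q := Function.update_of_ne hq _ _
  have hvr : ∀ r, r ≠ k → z r = y r := fun r hr => Function.update_of_ne hr _ _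
  rcases Classical.em (Succ y p q) with hS | hS
  · rcases Classical.em (Succ z p q) with hS' | hS'
    · exact absurd (iff_of_true hS hS') h
    · exact Or.inr (succ_transfer_aux hp hq hvp hvq hvr hS hS')
  · rcases Classical.em (Succ z p q) with hS' | hS'
    · exact Or.inl (succ_transfer_aux hp hq hvp.symm hvq.symm
        (fun r hr => (hvr r hr).symm) hS' hS)
    · exact absurd (iff_of_false hS hS') h

lemma min_transfer_aux {y z : Fin n → ℝ × ℝ × Bool} {k q : Fin n}
    (hq : q ≠ k) (hvq : z q = y q) (hvr : ∀ r, r ≠ k → z r = y r)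
    (hM : MinPt y q) (hM' : ¬ MinPt z q) : Succ z k q := by
  have hex : ∃ r, (z r).1 < (z q).1 := by
    by_contra hc
    push_neg at hc
    exact hM' fun r => hc r
  obtain ⟨r, hr⟩ := hex
  have hrk : r = k := by
    by_contra hrk
    have := hM r
    rw [← hvq, ← hvr r hrk] at this
    exact absurd hr (not_lt.mpr this)
  subst hrk
  refine ⟨hr, fun s hs => ?_⟩
  have hsk : s ≠ r := fun h' => by subst h'; exact lt_irrefl _ hs.1
  have := hM s
  rw [← hvq, ← hvr s hsk] at this
  exact absurd hs.2 (not_lt.mpr this)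

lemma min_transfer {y : Fin n → ℝ × ℝ × Bool} {k q : Fin n} {a : ℝ × ℝ × Bool}
    (hq : q ≠ k)
    (h : ¬ (MinPt y q ↔ MinPt (Function.update y k a) q)) :
    Succ y k q ∨ Succ (Function.update y k a) k q := by
  set z := Function.update y k a with hz
  have hvq : z q = y q := Function.update_of_ne hq _ _
  have hvr : ∀ r, r ≠ k → z r = y r := fun r hr => Function.update_of_ne hr _ _
  rcases Classical.em (MinPt y q) with hM | hM
  · rcases Classical.em (MinPt z q) with hM' | hM'
    · exact absurd (iff_of_true hM hM') h
    · exact Or.inr (min_transfer_aux hq hvq hvr hM hM')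
  · rcases Classical.em (MinPt z q) with hM' | hM'
    · exact Or.inl (min_transfer_aux hq hvq.symm (fun r hr => (hvr r hr).symm) hM' hM)
    · exact absurd (iff_of_false hM hM') h

lemma key_ite {A Io In Jo Jn G : Prop}
    [Decidable ((A ∧ ¬Io ∧ ¬Jo) ∧ G)] [Decidable ((A ∧ ¬Io ∧ ¬Jn) ∧ G)]
    [Decidable ((A ∧ ¬In ∧ ¬Jo) ∧ G)] [Decidable ((A ∧ ¬In ∧ ¬Jn) ∧ G)]
    (h1 : ¬(A ∧ Io ∧ Jo)) (h2 : ¬(A ∧ Io ∧ Jn)) (h3 : ¬(A ∧ In ∧ Jo)) (h4 : ¬(A ∧ In ∧ Jn)) :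
    ((if (A ∧ ¬Io ∧ ¬Jo) ∧ G then (1:ℤ) else 0) - (if (A ∧ ¬Io ∧ ¬Jn) ∧ G then 1 else 0)) =
    ((if (A ∧ ¬In ∧ ¬Jo) ∧ G then (1:ℤ) else 0) - (if (A ∧ ¬In ∧ ¬Jn) ∧ G then 1 else 0)) := by
  by_cases hA : A <;> by_cases hIo : Io <;> by_cases hIn : In <;> by_cases hJo : Jo <;>
    by_cases hJn : Jn <;> by_cases hG : G <;> simp_all

lemma succ_decomp (y : Fin n → ℝ × ℝ × Bool) (p q i j : Fin n) :
    Succ y p q ↔ (((y p).1 < (y q).1 ∧ ∀ r, r ≠ i → r ≠ j → ¬Btw y p q r) ∧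
      ¬Btw y p q i ∧ ¬Btw y p q j) := by
  constructor
  · intro h
    exact ⟨⟨h.1, fun r _ _ => h.2 r⟩, h.2 i, h.2 j⟩
  · rintro ⟨⟨h1, h2⟩, h3, h4⟩
    refine ⟨h1, fun r => ?_⟩
    by_cases hri : r = i
    · subst hri; exact h3
    by_cases hrj : r = j
    · subst hrj; exact h4
    exact h2 r hri hrj

lemma min_decomp (y : Fin n → ℝ × ℝ × Bool) (q i j : Fin n) :
    MinPt y q ↔ ((∀ r, r ≠ i → r ≠ j → (y q).1 ≤ (y r).1) ∧
      ¬((y i).1 < (y q).1) ∧ ¬((y j).1 < (y q).1)) := by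
  constructor
  · intro h
    exact ⟨fun r _ _ => h r, not_lt.mpr (h i), not_lt.mpr (h j)⟩
  · rintro ⟨h1, h2, h3⟩ r
    by_cases hri : r = i
    · subst hri; exact not_lt.mp h2
    by_cases hrj : r = j
    · subst hrj; exact not_lt.mp h3
    exact h1 r hri hrj

lemma adj_sandwich_one {y : Fin n → ℝ × ℝ × Bool} {p q i j : Fin n}
    (h : ∀ r, r ≠ i → r ≠ j → ¬Btw y p q r)
    (hi : Btw y p q i) (hj : Btw y p q j) (hlt : (y i).1 < (y j).1) : Succ y i j := by
  refine ⟨hlt, fun s hs => ?_⟩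
  have hsi : s ≠ i := fun h' => by subst h'; exact lt_irrefl _ hs.1
  have hsj : s ≠ j := fun h' => by subst h'; exact lt_irrefl _ hs.2
  exact h s hsi hsj ⟨lt_trans hi.1 hs.1, lt_trans hs.2 hj.2⟩

lemma adj_sandwich {y : Fin n → ℝ × ℝ × Bool} {p q i j : Fin n}
    (hd1 : ∀ a b, a ≠ b → (y a).1 ≠ (y b).1) (hij : i ≠ j)
    (h : ∀ r, r ≠ i → r ≠ j → ¬Btw y p q r)
    (hi : Btw y p q i) (hj : Btw y p q j) : Succ y i j ∨ Succ y j i := by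
  rcases (hd1 i j hij).lt_or_gt with hlt | hlt
  · exact Or.inl (adj_sandwich_one h hi hj hlt)
  · exact Or.inr (adj_sandwich_one (fun r h1 h2 => h r h2 h1) hj hi hlt)

lemma adj_bottom_one {y : Fin n → ℝ × ℝ × Bool} {q i j : Fin n}
    (h : ∀ r, r ≠ i → r ≠ j → (y q).1 ≤ (y r).1)
    (hi : (y i).1 < (y q).1) (hj : (y j).1 < (y q).1) (hlt : (y i).1 < (y j).1) :
    Succ y i j := by
  refine ⟨hlt, fun s hs => ?_⟩
  have hsi : s ≠ i := fun h' => by subst h'; exact lt_irrefl _ hs.1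
  have hsj : s ≠ j := fun h' => by subst h'; exact lt_irrefl _ hs.2
  exact absurd (lt_trans hs.2 hj) (not_lt.mpr (h s hsi hsj))

lemma adj_bottom {y : Fin n → ℝ × ℝ × Bool} {q i j : Fin n}
    (hd1 : ∀ a b, a ≠ b → (y a).1 ≠ (y b).1) (hij : i ≠ j)
    (h : ∀ r, r ≠ i → r ≠ j → (y q).1 ≤ (y r).1)
    (hi : (y i).1 < (y q).1) (hj : (y j).1 < (y q).1) : Succ y i j ∨ Succ y j i := by
  rcases (hd1 i j hij).lt_or_gt with hlt | hlt
  · exact Or.inl (adj_bottom_one h hi hj hlt)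
  · exact Or.inr (adj_bottom_one (fun r h1 h2 => h r h2 h1) hj hi hlt)

lemma Btw_congr {y z : Fin n → ℝ × ℝ × Bool} {p q r : Fin n}
    (h1 : (z p).1 = (y p).1) (h2 : (z q).1 = (y q).1) (h3 : (z r).1 = (y r).1) :
    Btw z p q r ↔ Btw y p q r := by
  unfold Btw; rw [h1, h2, h3]

lemma Gp_congr {y z : Fin n → ℝ × ℝ × Bool} {p q : Fin n}
    (h1 : z p = y p) (h2 : z q = y q) : Gp z p q ↔ Gp y p q := by
  unfold Gp; rw [h1, h2]

lemma mterm_congr {y z : Fin n → ℝ × ℝ × Bool} {q : Fin n}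
    (h1 : MinPt y q ↔ MinPt z q) (h2 : y q = z q) : mterm y q = mterm z q := by
  unfold mterm
  exact if_congr (and_congr h1 (by rw [h2])) rfl rfl

lemma sterm_congr {y z : Fin n → ℝ × ℝ × Bool} {p q : Fin n}
    (h1 : Succ y p q ↔ Succ z p q) (h2 : y p = z p) (h3 : y q = z q) :
    sterm y p q = sterm z p q := by
  unfold sterm
  exact if_congr (and_congr h1 (Gp_congr h2.symm h3.symm).symm) rfl rfl

lemma sterm_zero {y : Fin n → ℝ × ℝ × Bool} {p q : Fin n} (h : ¬ Succ y p q) :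
    sterm y p q = 0 := if_neg (fun hc => h hc.1)

lemma succ_all_congr {y z : Fin n → ℝ × ℝ × Bool} {p q i j : Fin n}
    (fp : (z p).1 = (y p).1) (fq : (z q).1 = (y q).1)
    (fr : ∀ r, r ≠ i → r ≠ j → (z r).1 = (y r).1) :
    (∀ r, r ≠ i → r ≠ j → ¬Btw z p q r) ↔ (∀ r, r ≠ i → r ≠ j → ¬Btw y p q r) := by
  refine forall_congr' fun r => ?_
  by_cases hri : r = i
  · simp [hri]
  by_cases hrj : r = j
  · simp [hrj]
  simp only [hri, hrj, ne_eq, not_false_iff, true_implies]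
  exact not_congr (Btw_congr fp fq (fr r hri hrj))

lemma min_all_congr {y z : Fin n → ℝ × ℝ × Bool} {q i j : Fin n}
    (fq : (z q).1 = (y q).1)
    (fr : ∀ r, r ≠ i → r ≠ j → (z r).1 = (y r).1) :
    (∀ r, r ≠ i → r ≠ j → (z q).1 ≤ (z r).1) ↔ (∀ r, r ≠ i → r ≠ j → (y q).1 ≤ (y r).1) := by
  refine forall_congr' fun r => ?_
  by_cases hri : r = i
  · simp [hri]
  by_cases hrj : r = j
  · simp [hrj]
  simp only [hri, hrj, ne_eq, not_false_iff, true_implies]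
  rw [fq, fr r hri hrj]

lemma main_locsum (x x' : Fin n → ℝ × ℝ × Bool) (i j : Fin n) (hij : i ≠ j)
    (hd : DistinctCoords x)
    (hdi : DistinctCoords (Function.update x i (x' i)))
    (hdj : DistinctCoords (Function.update x j (x' j)))
    (hdij : DistinctCoords (Function.update (Function.update x i (x' i)) j (x' j)))
    (hgap : RankGap x i j)
    (hgapi : RankGap (Function.update x i (x' i)) i j)
    (hgapj : RankGap (Function.update x j (x' j)) i j)
    (hgapij : RankGap (Function.update (Function.update x i (x' i)) j (x' j)) i j) :
    locsum x - locsum (Function.update x j (x' j)) =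
      locsum (Function.update x i (x' i)) -
        locsum (Function.update (Function.update x i (x' i)) j (x' j)) := by
  classical
  set ai := x' i with hai
  set aj := x' j with haj
  set xi := Function.update x i ai with hxi
  set xj := Function.update x j aj with hxj
  set xij := Function.update xi j aj with hxij
  have hcomm : xij = Function.update xj i ai := by
    rw [hxij, hxi, hxj]; exact Function.update_comm hij _ _ _
  have vxj : ∀ r, r ≠ j → xj r = x r := fun r hr => Function.update_of_ne hr _ _
  have vxi : ∀ r, r ≠ i → xi r = x r := fun r hr => Function.update_of_ne hr _ _
  have vxij_j : ∀ r, r ≠ j → xij r = xi r := fun r hr => Function.update_of_ne hr _ _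
  have vxij_i : ∀ r, r ≠ i → xij r = xj r := fun r hr => by
    rw [hcomm]; exact Function.update_of_ne hr _ _
  have vxjj : xj j = aj := Function.update_self _ _ _
  have vxii : xi i = ai := Function.update_self _ _ _
  have vxijj : xij j = aj := Function.update_self _ _ _
  have vxiji : xij i = ai := by rw [hcomm]; exact Function.update_self _ _ _
  obtain ⟨na1, na2⟩ := no_adj hd hgap
  obtain ⟨nai1, nai2⟩ := no_adj hdi hgapi
  obtain ⟨naj1, naj2⟩ := no_adj hdj hgapj
  obtain ⟨naij1, naij2⟩ := no_adj hdij hgapij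
  -- termwise identity for the boundary terms
  have hm : ∀ q, mterm x q - mterm xj q = mterm xi q - mterm xij q := by
    intro q
    by_cases hqi : q = i
    · subst hqi
      have h1 : MinPt x q ↔ MinPt xj q := by
        by_contra hc
        rw [hxj] at hc
        rcases min_transfer hij hc with h | h
        · exact na2 h
        · rw [← hxj] at h; exact naj2 h
      have h2 : MinPt xi q ↔ MinPt xij q := by
        by_contra hc
        rw [hxij] at hc
        rcases min_transfer hij hc with h | h
        · exact nai2 h
        · rw [← hxij] at h; exact naij2 h
      rw [mterm_congr h1 (vxj q hij).symm, mterm_congr h2 (vxij_j q hij).symm]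
      ring
    · by_cases hqj : q = j
      · subst hqj
        have h1 : MinPt x q ↔ MinPt xi q := by
          by_contra hc
          rw [hxi] at hc
          rcases min_transfer hij.symm hc with h | h
          · exact na1 h
          · rw [← hxi] at h; exact nai1 h
        have h2 : MinPt xj q ↔ MinPt xij q := by
          by_contra hc
          rw [hcomm] at hc
          rcases min_transfer hij.symm hc with h | h
          · exact naj1 h
          · rw [← hcomm] at h; exact naij1 h
        rw [mterm_congr h1 (vxi q hij.symm).symm,
          mterm_congr h2 (show xj q = xij q by rw [vxjj, vxijj])]
      · -- q ∉ {i, j}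
        have e1 : mterm x q = if ((∀ r, r ≠ i → r ≠ j → (x q).1 ≤ (x r).1) ∧
            ¬((x i).1 < (x q).1) ∧ ¬((x j).1 < (x q).1)) ∧ ((x q).2.2 = false)
            then (1:ℤ) else 0 := by
          unfold mterm
          exact if_congr (and_congr (min_decomp x q i j) Iff.rfl) rfl rfl
        have e2 : mterm xj q = if ((∀ r, r ≠ i → r ≠ j → (x q).1 ≤ (x r).1) ∧
            ¬((x i).1 < (x q).1) ∧ ¬((aj).1 < (x q).1)) ∧ ((x q).2.2 = false)
            then (1:ℤ) else 0 := by
          unfold mterm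
          refine if_congr (and_congr ((min_decomp xj q i j).trans ?_) (by rw [vxj q hqj])) rfl rfl
          refine and_congr ?_ (and_congr ?_ ?_)
          · exact min_all_congr (by rw [vxj q hqj]) (fun r _ hrj => by rw [vxj r hrj])
          · rw [vxj i hij, vxj q hqj]
          · rw [vxjj, vxj q hqj]
        have e3 : mterm xi q = if ((∀ r, r ≠ i → r ≠ j → (x q).1 ≤ (x r).1) ∧
            ¬((ai).1 < (x q).1) ∧ ¬((x j).1 < (x q).1)) ∧ ((x q).2.2 = false)
            then (1:ℤ) else 0 := by
          unfold mterm
          refine if_congr (and_congr ((min_decomp xi q i j).trans ?_) (by rw [vxi q hqi])) rfl rfl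
          refine and_congr ?_ (and_congr ?_ ?_)
          · exact min_all_congr (by rw [vxi q hqi]) (fun r hri _ => by rw [vxi r hri])
          · rw [vxii, vxi q hqi]
          · rw [vxi j hij.symm, vxi q hqi]
        have e4 : mterm xij q = if ((∀ r, r ≠ i → r ≠ j → (x q).1 ≤ (x r).1) ∧
            ¬((ai).1 < (x q).1) ∧ ¬((aj).1 < (x q).1)) ∧ ((x q).2.2 = false)
            then (1:ℤ) else 0 := by
          unfold mterm
          refine if_congr (and_congr ((min_decomp xij q i j).trans ?_)
            (by rw [vxij_j q hqj, vxi q hqi])) rfl rfl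
          refine and_congr ?_ (and_congr ?_ ?_)
          · exact min_all_congr (by rw [vxij_j q hqj, vxi q hqi])
              (fun r hri hrj => by rw [vxij_j r hrj, vxi r hri])
          · rw [vxiji, vxij_j q hqj, vxi q hqi]
          · rw [vxijj, vxij_j q hqj, vxi q hqi]
        rw [e1, e2, e3, e4]
        apply key_ite
        · rintro ⟨hA, hio, hjo⟩
          rcases adj_bottom hd.1 hij hA hio hjo with h | h
          · exact na1 h
          · exact na2 h
        · rintro ⟨hA, hio, hjn⟩
          have hA' : ∀ r, r ≠ i → r ≠ j → (xj q).1 ≤ (xj r).1 := by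
            intro r hri hrj; rw [vxj q hqj, vxj r hrj]; exact hA r hri hrj
          have hio' : (xj i).1 < (xj q).1 := by rw [vxj i hij, vxj q hqj]; exact hio
          have hjn' : (xj j).1 < (xj q).1 := by rw [vxjj, vxj q hqj]; exact hjn
          rcases adj_bottom hdj.1 hij hA' hio' hjn' with h | h
          · exact naj1 h
          · exact naj2 h
        · rintro ⟨hA, hin, hjo⟩
          have hA' : ∀ r, r ≠ i → r ≠ j → (xi q).1 ≤ (xi r).1 := by
            intro r hri hrj; rw [vxi q hqi, vxi r hri]; exact hA r hri hrj
          have hin' : (xi i).1 < (xi q).1 := by rw [vxii, vxi q hqi]; exact hin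
          have hjo' : (xi j).1 < (xi q).1 := by rw [vxi j hij.symm, vxi q hqi]; exact hjo
          rcases adj_bottom hdi.1 hij hA' hin' hjo' with h | h
          · exact nai1 h
          · exact nai2 h
        · rintro ⟨hA, hin, hjn⟩
          have hA' : ∀ r, r ≠ i → r ≠ j → (xij q).1 ≤ (xij r).1 := by
            intro r hri hrj
            rw [vxij_j q hqj, vxi q hqi, vxij_j r hrj, vxi r hri]
            exact hA r hri hrj
          have hin' : (xij i).1 < (xij q).1 := by
            rw [vxiji, vxij_j q hqj, vxi q hqi]; exact hin
          have hjn' : (xij j).1 < (xij q).1 := by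
            rw [vxijj, vxij_j q hqj, vxi q hqi]; exact hjn
          rcases adj_bottom hdij.1 hij hA' hin' hjn' with h | h
          · exact naij1 h
          · exact naij2 h
  -- termwise identity for the adjacent-pair terms
  have hs : ∀ p q, sterm x p q - sterm xj p q = sterm xi p q - sterm xij p q := by
    intro p q
    by_cases hpq : p = q
    · subst hpq
      have hz : ∀ y : Fin n → ℝ × ℝ × Bool, ¬ Succ y p p := fun y h => lt_irrefl _ h.1
      rw [sterm_zero (hz x), sterm_zero (hz xj), sterm_zero (hz xi), sterm_zero (hz xij)]
    by_cases hpi : p = i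
    · rw [hpi]
      by_cases hqj : q = j
      · rw [hqj]
        rw [sterm_zero na1, sterm_zero naj1, sterm_zero nai1, sterm_zero naij1]
      · have hqi : q ≠ i := fun h => hpq (hpi.trans h.symm)
        have h1 : Succ x i q ↔ Succ xj i q := by
          by_contra hc
          rw [hxj] at hc
          rcases succ_transfer hij hqj hc with ⟨h, -⟩ | ⟨h, -⟩
          · exact na1 h
          · rw [← hxj] at h; exact naj1 h
        have h2 : Succ xi i q ↔ Succ xij i q := by
          by_contra hc
          rw [hxij] at hc
          rcases succ_transfer hij hqj hc with ⟨h, -⟩ | ⟨h, -⟩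
          · exact nai1 h
          · rw [← hxij] at h; exact naij1 h
        rw [sterm_congr h1 (vxj i hij).symm (vxj q hqj).symm,
          sterm_congr h2 (vxij_j i hij).symm (vxij_j q hqj).symm]
        ring
    by_cases hqi : q = i
    · rw [hqi]
      by_cases hpj : p = j
      · rw [hpj]
        rw [sterm_zero na2, sterm_zero naj2, sterm_zero nai2, sterm_zero naij2]
      · have h1 : Succ x p i ↔ Succ xj p i := by
          by_contra hc
          rw [hxj] at hc
          rcases succ_transfer hpj hij hc with ⟨-, h⟩ | ⟨-, h⟩
          · exact na2 h
          · rw [← hxj] at h; exact naj2 h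
        have h2 : Succ xi p i ↔ Succ xij p i := by
          by_contra hc
          rw [hxij] at hc
          rcases succ_transfer hpj hij hc with ⟨-, h⟩ | ⟨-, h⟩
          · exact nai2 h
          · rw [← hxij] at h; exact naij2 h
        rw [sterm_congr h1 (vxj p hpj).symm (vxj i hij).symm,
          sterm_congr h2 (vxij_j p hpj).symm (vxij_j i hij).symm]
        ring
    by_cases hpj : p = j
    · rw [hpj]
      have hqj : q ≠ j := fun h => hpq (hpj.trans h.symm)
      have h1 : Succ x j q ↔ Succ xi j q := by
        by_contra hc
        rw [hxi] at hc
        rcases succ_transfer hij.symm hqi hc with ⟨h, -⟩ | ⟨h, -⟩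
        · exact na2 h
        · rw [← hxi] at h; exact nai2 h
      have h2 : Succ xj j q ↔ Succ xij j q := by
        by_contra hc
        rw [hcomm] at hc
        rcases succ_transfer hij.symm hqi hc with ⟨h, -⟩ | ⟨h, -⟩
        · exact naj2 h
        · rw [← hcomm] at h; exact naij2 h
      rw [sterm_congr h1 (vxi j hij.symm).symm (vxi q hqi).symm,
        sterm_congr h2 (show xj j = xij j by rw [vxjj, vxijj]) (vxij_i q hqi).symm]
    by_cases hqj : q = j
    · rw [hqj]
      have h1 : Succ x p j ↔ Succ xi p j := by
        by_contra hc
        rw [hxi] at hc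
        rcases succ_transfer hpi hij.symm hc with ⟨-, h⟩ | ⟨-, h⟩
        · exact na1 h
        · rw [← hxi] at h; exact nai1 h
      have h2 : Succ xj p j ↔ Succ xij p j := by
        by_contra hc
        rw [hcomm] at hc
        rcases succ_transfer hpi hij.symm hc with ⟨-, h⟩ | ⟨-, h⟩
        · exact naj1 h
        · rw [← hcomm] at h; exact naij1 h
      rw [sterm_congr h1 (vxi p hpi).symm (vxi j hij.symm).symm,
        sterm_congr h2 (vxij_i p hpi).symm (show xj j = xij j by rw [vxjj, vxijj])]
    · -- generic case: p, q ∉ {i, j}, p ≠ q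
      have e1 : sterm x p q = if ((((x p).1 < (x q).1 ∧ ∀ r, r ≠ i → r ≠ j → ¬Btw x p q r) ∧
          ¬Btw x p q i ∧ ¬Btw x p q j) ∧ Gp x p q) then (1:ℤ) else 0 := by
        unfold sterm
        exact if_congr (and_congr (succ_decomp x p q i j) Iff.rfl) rfl rfl
      have e2 : sterm xj p q = if ((((x p).1 < (x q).1 ∧ ∀ r, r ≠ i → r ≠ j → ¬Btw x p q r) ∧
          ¬Btw x p q i ∧ ¬Btw xj p q j) ∧ Gp x p q) then (1:ℤ) else 0 := by
        unfold sterm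
        refine if_congr (and_congr ((succ_decomp xj p q i j).trans ?_)
          (Gp_congr (vxj p hpj) (vxj q hqj))) rfl rfl
        refine and_congr (and_congr ?_ ?_) (and_congr ?_ Iff.rfl)
        · rw [vxj p hpj, vxj q hqj]
        · exact succ_all_congr (by rw [vxj p hpj]) (by rw [vxj q hqj])
            (fun r _ hrj => by rw [vxj r hrj])
        · exact not_congr (Btw_congr (by rw [vxj p hpj]) (by rw [vxj q hqj])
            (by rw [vxj i hij]))
      have e3 : sterm xi p q = if ((((x p).1 < (x q).1 ∧ ∀ r, r ≠ i → r ≠ j → ¬Btw x p q r) ∧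
          ¬Btw xi p q i ∧ ¬Btw x p q j) ∧ Gp x p q) then (1:ℤ) else 0 := by
        unfold sterm
        refine if_congr (and_congr ((succ_decomp xi p q i j).trans ?_)
          (Gp_congr (vxi p hpi) (vxi q hqi))) rfl rfl
        refine and_congr (and_congr ?_ ?_) (and_congr Iff.rfl ?_)
        · rw [vxi p hpi, vxi q hqi]
        · exact succ_all_congr (by rw [vxi p hpi]) (by rw [vxi q hqi])
            (fun r hri _ => by rw [vxi r hri])
        · exact not_congr (Btw_congr (by rw [vxi p hpi]) (by rw [vxi q hqi])
            (by rw [vxi j hij.symm]))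
      have e4 : sterm xij p q = if ((((x p).1 < (x q).1 ∧ ∀ r, r ≠ i → r ≠ j → ¬Btw x p q r) ∧
          ¬Btw xi p q i ∧ ¬Btw xj p q j) ∧ Gp x p q) then (1:ℤ) else 0 := by
        unfold sterm
        refine if_congr (and_congr ((succ_decomp xij p q i j).trans ?_)
          (Gp_congr (by rw [vxij_j p hpj, vxi p hpi]) (by rw [vxij_j q hqj, vxi q hqi]))) rfl rfl
        refine and_congr (and_congr ?_ ?_) (and_congr ?_ ?_)
        · rw [vxij_j p hpj, vxi p hpi, vxij_j q hqj, vxi q hqi]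
        · exact succ_all_congr (by rw [vxij_j p hpj, vxi p hpi])
            (by rw [vxij_j q hqj, vxi q hqi])
            (fun r hri hrj => by rw [vxij_j r hrj, vxi r hri])
        · exact not_congr (Btw_congr (by rw [vxij_j p hpj]) (by rw [vxij_j q hqj])
            (by rw [vxiji, vxii]))
        · exact not_congr (Btw_congr (by rw [vxij_i p hpi]) (by rw [vxij_i q hqi])
            (by rw [vxijj, vxjj]))
      rw [e1, e2, e3, e4]
      apply key_ite
      · rintro ⟨⟨-, hall⟩, hio, hjo⟩
        rcases adj_sandwich hd.1 hij hall hio hjo with h | h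
        · exact na1 h
        · exact na2 h
      · rintro ⟨⟨-, hall⟩, hio, hjn⟩
        have hall' : ∀ r, r ≠ i → r ≠ j → ¬Btw xj p q r := fun r hri hrj hb =>
          hall r hri hrj ((Btw_congr (by rw [vxj p hpj]) (by rw [vxj q hqj])
            (by rw [vxj r hrj])).mp hb)
        have hio' : Btw xj p q i := (Btw_congr (by rw [vxj p hpj]) (by rw [vxj q hqj])
          (by rw [vxj i hij])).mpr hio
        rcases adj_sandwich hdj.1 hij hall' hio' hjn with h | h
        · exact naj1 h
        · exact naj2 h
      · rintro ⟨⟨-, hall⟩, hin, hjo⟩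
        have hall' : ∀ r, r ≠ i → r ≠ j → ¬Btw xi p q r := fun r hri hrj hb =>
          hall r hri hrj ((Btw_congr (by rw [vxi p hpi]) (by rw [vxi q hqi])
            (by rw [vxi r hri])).mp hb)
        have hjo' : Btw xi p q j := (Btw_congr (by rw [vxi p hpi]) (by rw [vxi q hqi])
          (by rw [vxi j hij.symm])).mpr hjo
        rcases adj_sandwich hdi.1 hij hall' hin hjo' with h | h
        · exact nai1 h
        · exact nai2 h
      · rintro ⟨⟨-, hall⟩, hin, hjn⟩
        have hall' : ∀ r, r ≠ i → r ≠ j → ¬Btw xij p q r := fun r hri hrj hb =>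
          hall r hri hrj ((Btw_congr (by rw [vxij_j p hpj, vxi p hpi])
            (by rw [vxij_j q hqj, vxi q hqi])
            (by rw [vxij_j r hrj, vxi r hri])).mp hb)
        have hin' : Btw xij p q i := (Btw_congr (by rw [vxij_j p hpj])
          (by rw [vxij_j q hqj]) (by rw [vxiji, vxii])).mpr hin
        have hjn' : Btw xij p q j := (Btw_congr (by rw [vxij_i p hpi])
          (by rw [vxij_i q hqi]) (by rw [vxijj, vxjj])).mpr hjn
        rcases adj_sandwich hdij.1 hij hall' hin' hjn' with h | h
        · exact naij1 h
        · exact naij2 h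
  unfold locsum
  rw [← Finset.sum_sub_distrib, ← Finset.sum_sub_distrib]
  apply Finset.sum_congr rfl
  intro q _
  have hss : (∑ p, sterm x p q) - (∑ p, sterm xj p q) =
      (∑ p, sterm xi p q) - (∑ p, sterm xij p q) := by
    rw [← Finset.sum_sub_distrib, ← Finset.sum_sub_distrib]
    exact Finset.sum_congr rfl fun p _ => hs p q
  have hmq := hm q
  omega

/-- Swap the two coordinates of every point. -/
def swapC (y : Fin n → ℝ × ℝ × Bool) : Fin n → ℝ × ℝ × Bool :=
  fun p => ((y p).2.1, (y p).1, (y p).2.2)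

lemma xrank_swapC (y : Fin n → ℝ × ℝ × Bool) : xrank (swapC y) = yrank y := rfl

lemma yrank_swapC (y : Fin n → ℝ × ℝ × Bool) : yrank (swapC y) = xrank y := rfl

lemma bsgn_swapC (y : Fin n → ℝ × ℝ × Bool) : bsgn (swapC y) = bsgn y := rfl

lemma distinct_swapC {y : Fin n → ℝ × ℝ × Bool} (hd : DistinctCoords y) :
    DistinctCoords (swapC y) := ⟨hd.2, hd.1⟩

lemma rankgap_swapC {y : Fin n → ℝ × ℝ × Bool} {i j : Fin n} (hg : RankGap y i j) :
    RankGap (swapC y) i j := by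
  refine ⟨?_, ?_⟩
  · rw [xrank_swapC]; exact hg.2
  · rw [yrank_swapC]; exact hg.1

lemma swapC_update (y : Fin n → ℝ × ℝ × Bool) (k : Fin n) (a : ℝ × ℝ × Bool) :
    swapC (Function.update y k a) = Function.update (swapC y) k (a.2.1, a.1, a.2.2) := by
  funext p
  by_cases hp : p = k
  · subst hp; simp [swapC, Function.update_self]
  · simp [swapC, Function.update_of_ne hp]

lemma isSignedPerm_inv {P : Equiv.Perm (SIdx n)} (h : IsSignedPerm n P) :
    IsSignedPerm n P⁻¹ := by
  intro i
  apply P.injective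
  rw [show P (P⁻¹ (-i)) = -i from P.apply_symm_apply _, h (P⁻¹ i),
    show P (P⁻¹ i) = i from P.apply_symm_apply _]

lemma assoc_swapC {y : Fin n → ℝ × ℝ × Bool} {P : Equiv.Perm (SIdx n)}
    (hP : AssocSigned y P) : AssocSigned (swapC y) P⁻¹ := by
  refine ⟨isSignedPerm_inv hP.1, fun p => ?_⟩
  have hx1 := xrank_pos y p
  have hxn := xrank_le_n y p
  have hy1 := yrank_pos y p
  have hyn := yrank_le_n y p
  have hr : ((xrank y p : ℤ) ≠ 0 ∧ |(xrank y p : ℤ)| ≤ (n : ℤ)) := by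
    constructor
    · omega
    · rw [abs_of_nonneg (Int.natCast_nonneg _)]; exact_mod_cast hxn
  have hk : ((yrank y p : ℤ) ≠ 0 ∧ |(yrank y p : ℤ)| ≤ (n : ℤ)) := by
    constructor
    · omega
    · rw [abs_of_nonneg (Int.natCast_nonneg _)]; exact_mod_cast hyn
  have hval := hP.2 p
  rw [xrank_swapC, yrank_swapC, bsgn_swapC]
  rw [valAt, dif_pos hr] at hval
  rw [valAt, dif_pos hk]
  cases hb : (y p).2.2
  · rw [show bsgn y p = -1 from by simp [bsgn, hb]] at hval ⊢
    have hPeq : P ⟨(xrank y p : ℤ), hr⟩ = -(⟨(yrank y p : ℤ), hk⟩ : SIdx n) := by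
      apply Subtype.ext
      rw [SIdx.neg_val, hval]; ring
    have h2 : P⁻¹ (-(⟨(yrank y p : ℤ), hk⟩ : SIdx n)) = ⟨(xrank y p : ℤ), hr⟩ := by
      rw [← hPeq]; exact P.symm_apply_apply _
    have h3 : -(P⁻¹ (⟨(yrank y p : ℤ), hk⟩ : SIdx n)) = ⟨(xrank y p : ℤ), hr⟩ := by
      rw [← isSignedPerm_inv hP.1 ⟨(yrank y p : ℤ), hk⟩]; exact h2
    have h4 : P⁻¹ (⟨(yrank y p : ℤ), hk⟩ : SIdx n) = -(⟨(xrank y p : ℤ), hr⟩ : SIdx n) := by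
      rw [← h3]
      apply Subtype.ext
      rw [SIdx.neg_val, SIdx.neg_val, neg_neg]
    rw [h4, SIdx.neg_val]; ring
  · rw [show bsgn y p = 1 from by simp [bsgn, hb]] at hval ⊢
    have hPeq : P ⟨(xrank y p : ℤ), hr⟩ = (⟨(yrank y p : ℤ), hk⟩ : SIdx n) := by
      apply Subtype.ext
      rw [hval]; ring
    have h4 : P⁻¹ (⟨(yrank y p : ℤ), hk⟩ : SIdx n) = ⟨(xrank y p : ℤ), hr⟩ := by
      rw [← hPeq]; exact P.symm_apply_apply _
    rw [h4]; ring

end Stmt14Aux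

/-- The graphical rule joining `i` and `j` when their x-ranks or y-ranks
differ by at most `1` is an interaction rule for `f = des(π̃(·)) + des(π̃(·)⁻¹)`: if in all
four configurations `x`, `x^{i}`, `x^{j}`, `x^{ij}` the ranks of positions `i` and `j` are
at least `2` apart, then `f(x) - f(x^{j}) = f(x^{i}) - f(x^{ij})`. -/
theorem stmt14 (n : ℕ) (x x' : Fin n → ℝ × ℝ × Bool) (i j : Fin n) (hij : i ≠ j)
    (hx : InRange x) (hx' : InRange x')
    (hd : DistinctCoords x)
    (hdi : DistinctCoords (Function.update x i (x' i)))
    (hdj : DistinctCoords (Function.update x j (x' j)))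
    (hdij : DistinctCoords (Function.update (Function.update x i (x' i)) j (x' j)))
    (hgap : RankGap x i j)
    (hgapi : RankGap (Function.update x i (x' i)) i j)
    (hgapj : RankGap (Function.update x j (x' j)) i j)
    (hgapij : RankGap (Function.update (Function.update x i (x' i)) j (x' j)) i j)
    (P Pi Pj Pij : Equiv.Perm (SIdx n))
    (hP : AssocSigned x P)
    (hPi : AssocSigned (Function.update x i (x' i)) Pi)
    (hPj : AssocSigned (Function.update x j (x' j)) Pj)
    (hPij : AssocSigned (Function.update (Function.update x i (x' i)) j (x' j)) Pij) :
    fstat n P - fstat n Pj = fstat n Pi - fstat n Pij := by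
  classical
  have e_i : Stmt14Aux.swapC (Function.update x i (x' i)) =
      Function.update (Stmt14Aux.swapC x) i (Stmt14Aux.swapC x' i) :=
    Stmt14Aux.swapC_update x i (x' i)
  have e_j : Stmt14Aux.swapC (Function.update x j (x' j)) =
      Function.update (Stmt14Aux.swapC x) j (Stmt14Aux.swapC x' j) :=
    Stmt14Aux.swapC_update x j (x' j)
  have e_ij : Stmt14Aux.swapC (Function.update (Function.update x i (x' i)) j (x' j)) =
      Function.update (Function.update (Stmt14Aux.swapC x) i (Stmt14Aux.swapC x' i)) j
        (Stmt14Aux.swapC x' j) := by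
    rw [Stmt14Aux.swapC_update, e_i]
    rfl
  have M1 := Stmt14Aux.main_locsum x x' i j hij hd hdi hdj hdij hgap hgapi hgapj hgapij
  have M2 := Stmt14Aux.main_locsum (Stmt14Aux.swapC x) (Stmt14Aux.swapC x') i j hij
    (Stmt14Aux.distinct_swapC hd)
    (by rw [← e_i]; exact Stmt14Aux.distinct_swapC hdi)
    (by rw [← e_j]; exact Stmt14Aux.distinct_swapC hdj)
    (by rw [← e_ij]; exact Stmt14Aux.distinct_swapC hdij)
    (Stmt14Aux.rankgap_swapC hgap)
    (by rw [← e_i]; exact Stmt14Aux.rankgap_swapC hgapi)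
    (by rw [← e_j]; exact Stmt14Aux.rankgap_swapC hgapj)
    (by rw [← e_ij]; exact Stmt14Aux.rankgap_swapC hgapij)
  have H1 := Stmt14Aux.desB_eq_locsum hd hP
  have H2 := Stmt14Aux.desB_eq_locsum hdj hPj
  have H3 := Stmt14Aux.desB_eq_locsum hdi hPi
  have H4 := Stmt14Aux.desB_eq_locsum hdij hPij
  have G1 := Stmt14Aux.desB_eq_locsum (Stmt14Aux.distinct_swapC hd) (Stmt14Aux.assoc_swapC hP)
  have G2 := Stmt14Aux.desB_eq_locsum (Stmt14Aux.distinct_swapC hdj) (Stmt14Aux.assoc_swapC hPj)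
  have G3 := Stmt14Aux.desB_eq_locsum (Stmt14Aux.distinct_swapC hdi) (Stmt14Aux.assoc_swapC hPi)
  have G4 := Stmt14Aux.desB_eq_locsum (Stmt14Aux.distinct_swapC hdij) (Stmt14Aux.assoc_swapC hPij)
  rw [e_j] at G2
  rw [e_i] at G3
  rw [e_ij] at G4
  unfold fstat
  rw [H1, H2, H3, H4, G1, G2, G3, G4]
  linarith [M1, M2]
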